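/- arXiv:2406.06797 — 4 statements merged into one kernel-verified Lean document; each statement's English description precedes it below -/
import Mathlib

section
/- For all complex numbers a, b and all integers n ≥ 0, m ≥ 0: Σ_{k=0}^{n} C(n,k) a^k b^{n−k} H_k(m) = Σ_{j=0}^{m} C(m,j) Σ_{k=0}^{n} H_k(j) (a+b)^k · ((m−j)!/(n−k)!) · (−1)^{n−k} b^{n−k} s(n−k, m−j), where s(n,k) are the Stirling numbers of the first kind (the terms with n−k < m−j vanish since then s(n−k, m−j) = 0). -/
open Finset

/-- Multiple harmonic-like numbers `H_n(m)`: the sum of `1/(k_1 ⋯ k_m)` over all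
`m`-tuples of positive integers with `k_1 + ⋯ + k_m ≤ n`. -/
def Hml (n m : ℕ) : ℚ :=
  ∑ k ∈ (Fintype.piFinset fun _ : Fin m => Finset.Icc 1 n).filter
      (fun k => ∑ i, k i ≤ n),
    ∏ i, (1 : ℚ) / (k i : ℚ)

/-- The `n`-th harmonic number. -/
def harm (n : ℕ) : ℚ := ∑ j ∈ Finset.Icc 1 n, (1 : ℚ) / (j : ℚ)

/-- The `n`-th second-order harmonic number. -/
def harm2 (n : ℕ) : ℚ := ∑ j ∈ Finset.Icc 1 n, (1 : ℚ) / (j : ℚ) ^ 2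

/-- The `n`-th odd harmonic number. -/
def oddharm (n : ℕ) : ℚ := ∑ k ∈ Finset.Icc 1 n, (1 : ℚ) / (2 * (k : ℚ) - 1)

/-- Signed Stirling numbers of the first kind. -/
def stirlingFirst : ℕ → ℕ → ℤ
  | 0, 0 => 1
  | 0, _ + 1 => 0
  | _ + 1, 0 => 0
  | n + 1, k + 1 => stirlingFirst n k - n * stirlingFirst n (k + 1)

/-- Generalized binomial coefficient `C(r, k) = r(r−1)⋯(r−k+1)/k!`. -/
noncomputable def gchoose (r : ℂ) (k : ℕ) : ℂ :=
  (∏ i ∈ Finset.range k, (r - i)) / (k.factorial : ℂ)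

section AuxLemmas

open PowerSeries

lemma Hml_zero (n : ℕ) : Hml n 0 = 1 := by
  simp [Hml]

lemma Hml_zero' (m : ℕ) : Hml 0 (m + 1) = 0 := by
  simp [Hml]

-- independence of the upper bound
lemma Hml_indep (n m N : ℕ) (h : n ≤ N) :
    Hml n m = ∑ k ∈ (Fintype.piFinset fun _ : Fin m => Finset.Icc 1 N).filter
      (fun k => ∑ i, k i ≤ n), ∏ i, (1 : ℚ) / (k i : ℚ) := by
  apply Finset.sum_congr
  · ext k
    simp only [mem_filter, Fintype.mem_piFinset, mem_Icc]
    constructor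
    · rintro ⟨h1, h2⟩
      exact ⟨fun a => ⟨(h1 a).1, le_trans (h1 a).2 h⟩, h2⟩
    · rintro ⟨h1, h2⟩
      refine ⟨fun a => ⟨(h1 a).1, ?_⟩, h2⟩
      calc k a ≤ ∑ i, k i := Finset.single_le_sum (f := fun i => k i)
                  (fun i _ => Nat.zero_le _) (mem_univ a)
        _ ≤ n := h2
  · intros; rfl

lemma Hml_succ (n m : ℕ) :
    Hml n (m + 1) = ∑ t ∈ Finset.Icc 1 n, (1 / (t : ℚ)) * Hml (n - t) m := by
  have : ∀ t ∈ Finset.Icc 1 n, (1 / (t : ℚ)) * Hml (n - t) m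
      = ∑ k ∈ (Fintype.piFinset fun _ : Fin m => Finset.Icc 1 n).filter
          (fun k => ∑ i, k i ≤ n - t), (1 / (t : ℚ)) * ∏ i, (1 : ℚ) / (k i : ℚ) := by
    intro t ht
    rw [Hml_indep (n - t) m n (Nat.sub_le _ _), Finset.mul_sum]
  rw [Finset.sum_congr rfl this]
  rw [Finset.sum_sigma']
  unfold Hml
  symm
  refine Finset.sum_nbij' (fun p => Fin.cons (α := fun _ => ℕ) p.1 p.2)
    (fun k => ⟨k 0, Fin.tail k⟩) ?_ ?_ ?_ ?_ ?_
  · rintro ⟨t, k⟩ hp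
    simp only [Finset.mem_sigma, mem_filter, Fintype.mem_piFinset, mem_Icc] at hp ⊢
    obtain ⟨ht, hk, hs⟩ := hp
    constructor
    · intro a
      refine Fin.cases ?_ ?_ a
      · simpa using ht
      · intro i; simpa using hk i
    · rw [Fin.sum_cons]
      omega
  · intro k hk
    simp only [Finset.mem_sigma, mem_filter, Fintype.mem_piFinset, mem_Icc] at hk ⊢
    obtain ⟨hk1, hk2⟩ := hk
    rw [Fin.sum_univ_succ] at hk2
    have htail : ∑ i, Fin.tail k i = ∑ i : Fin m, k i.succ := rfl
    refine ⟨hk1 0, fun i => hk1 i.succ, ?_⟩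
    rw [htail]
    have := (hk1 0).1
    omega
  · rintro ⟨t, k⟩ hp
    simp [Fin.tail_cons]
  · intro k hk
    simp [Fin.cons_self_tail]
  · rintro ⟨t, k⟩ hp
    rw [Fin.prod_univ_succ]
    simp [Fin.cons]
lemma choose_conv (p : ℕ) : ∀ (M q : ℕ), ∑ j ∈ Finset.range (M + 1),
    (Nat.choose j p) * (Nat.choose (M - j) q) = Nat.choose (M + 1) (p + q + 1) := by
  intro M
  induction M with
  | zero =>
    intro q
    cases p <;> cases q <;> simp [Nat.choose]
  | succ M ih =>
    intro q
    cases q with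
    | zero =>
      simp only [Nat.choose_zero_right, mul_one, Nat.add_zero]
      have h1 : ∑ j ∈ Finset.range (M + 1 + 1), Nat.choose j p
          = ∑ j ∈ Finset.Icc p (M + 1), Nat.choose j p := by
        symm
        apply Finset.sum_subset
        · intro i hi; rw [mem_Icc] at hi; rw [Finset.mem_range]; omega
        · intro i hi hni
          rw [Finset.mem_range] at hi; rw [mem_Icc] at hni
          exact Nat.choose_eq_zero_of_lt (by omega)
      rw [h1, Nat.sum_Icc_choose]
    | succ q =>
      rw [Finset.sum_range_succ, Nat.sub_self, Nat.choose_zero_succ, Nat.mul_zero, Nat.add_zero]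
      have h2 : ∀ j ∈ Finset.range (M + 1),
          Nat.choose j p * Nat.choose (M + 1 - j) (q + 1)
            = Nat.choose j p * Nat.choose (M - j) q + Nat.choose j p * Nat.choose (M - j) (q + 1) := by
        intro j hj
        rw [Finset.mem_range] at hj
        have : M + 1 - j = (M - j) + 1 := by omega
        rw [this, Nat.choose_succ_succ', Nat.mul_add]
      rw [Finset.sum_congr rfl h2, Finset.sum_add_distrib, ih q, ih (q + 1),
        show p + (q + 1) + 1 = p + q + 1 + 1 from by omega,
        Nat.choose_succ_succ' (M + 1) (p + q + 1)]

lemma inner_conv (n r i : ℕ) (hi1 : 1 ≤ i) (hin : i ≤ n - r) (hrn : r ≤ n) :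
    ∑ t ∈ Finset.Icc i (n - r), (Nat.choose t i : ℂ) / t * (Nat.choose (n - t) r : ℂ)
      = (Nat.choose n (i + r) : ℂ) / i := by
  have hi0 : (i : ℂ) ≠ 0 := Nat.cast_ne_zero.mpr (by omega)
  have step : ∀ t ∈ Finset.Icc i (n - r), (Nat.choose t i : ℂ) / t * (Nat.choose (n - t) r : ℂ)
      = (Nat.choose (t - 1) (i - 1) : ℂ) * (Nat.choose (n - t) r : ℂ) / i := by
    intro t ht
    rw [mem_Icc] at ht
    have ht1 : 1 ≤ t := le_trans hi1 ht.1
    have ht0 : (t : ℂ) ≠ 0 := Nat.cast_ne_zero.mpr (by omega)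
    have hkey : (t : ℕ) * Nat.choose (t - 1) (i - 1) = Nat.choose t i * i := by
      have := Nat.add_one_mul_choose_eq (t - 1) (i - 1)
      have e1 : t - 1 + 1 = t := by omega
      have e2 : i - 1 + 1 = i := by omega
      rw [e1, e2] at this
      exact this
    have hkeyC : (t : ℂ) * (Nat.choose (t - 1) (i - 1) : ℂ) = (Nat.choose t i : ℂ) * (i : ℂ) := by
      exact_mod_cast congrArg (fun x : ℕ => (x : ℂ)) hkey
    field_simp
    linear_combination (-(Nat.choose (n - t) r : ℂ)) * hkeyC
  rw [Finset.sum_congr rfl step]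
  rw [← Finset.sum_div]
  congr 1
  -- ∑ t ∈ Icc i (n-r), C(t-1,i-1) * C(n-t,r) = C(n, i+r)  (in ℂ, via ℕ)
  have hnat : ∑ t ∈ Finset.Icc i (n - r), Nat.choose (t - 1) (i - 1) * Nat.choose (n - t) r
      = Nat.choose n (i + r) := by
    have hext : ∑ t ∈ Finset.Icc i (n - r), Nat.choose (t - 1) (i - 1) * Nat.choose (n - t) r
        = ∑ t ∈ Finset.Icc 1 n, Nat.choose (t - 1) (i - 1) * Nat.choose (n - t) r := by
      apply Finset.sum_subset
      · intro t ht; rw [mem_Icc] at ht ⊢; omega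
      · intro t ht hnt
        rw [mem_Icc] at ht hnt
        rcases lt_or_ge t i with h | h
        · have : t - 1 < i - 1 := by omega
          rw [Nat.choose_eq_zero_of_lt this, Nat.zero_mul]
        · have : n - t < r := by omega
          rw [Nat.choose_eq_zero_of_lt this, Nat.mul_zero]
    rw [hext]
    have hre : ∑ t ∈ Finset.Icc 1 n, Nat.choose (t - 1) (i - 1) * Nat.choose (n - t) r
        = ∑ j ∈ Finset.range ((n - 1) + 1), Nat.choose j (i - 1) * Nat.choose ((n - 1) - j) r := by
      apply Finset.sum_nbij' (fun t => t - 1) (fun j => j + 1)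
      · intro t ht; rw [mem_Icc] at ht; rw [Finset.mem_range]; omega
      · intro j hj; rw [Finset.mem_range] at hj; rw [mem_Icc]; omega
      · intro t ht; rw [mem_Icc] at ht; omega
      · intro j hj; omega
      · intro t ht
        rw [mem_Icc] at ht
        congr 2
        omega
    rw [hre, choose_conv]
    congr 1 <;> omega
  calc ∑ t ∈ Finset.Icc i (n - r), (Nat.choose (t - 1) (i - 1) : ℂ) * (Nat.choose (n - t) r : ℂ)
      = ((∑ t ∈ Finset.Icc i (n - r), Nat.choose (t - 1) (i - 1) * Nat.choose (n - t) r : ℕ) : ℂ) := by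
        push_cast; rfl
    _ = _ := by rw [hnat]

lemma add_pow_sub (a b : ℂ) (t : ℕ) :
    (a + b) ^ t - b ^ t = ∑ i ∈ Finset.Icc 1 t, a ^ i * b ^ (t - i) * (Nat.choose t i : ℂ) := by
  rw [add_pow]
  have hins : Finset.range (t + 1) = insert 0 (Finset.Icc 1 t) := by
    ext x
    simp only [Finset.mem_range, Finset.mem_insert, mem_Icc]
    omega
  rw [hins, Finset.sum_insert (by simp)]
  simp only [pow_zero, Nat.sub_zero, Nat.choose_zero_right, Nat.cast_one, one_mul, mul_one]
  ring

lemma dagger (a b : ℂ) (n r : ℕ) (hrn : r ≤ n) :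
    ∑ u ∈ Finset.Icc 1 (n - r), (Nat.choose n (r + u) : ℂ) * a ^ u * b ^ (n - r - u) / u
      = ∑ t ∈ Finset.Icc 1 (n - r),
          ((a + b) ^ t - b ^ t) * b ^ (n - r - t) * (Nat.choose (n - t) r : ℂ) / t := by
  have hL : ∀ u ∈ Finset.Icc 1 (n - r), (Nat.choose n (r + u) : ℂ) * a ^ u * b ^ (n - r - u) / u
      = ∑ t ∈ Finset.Icc u (n - r),
          (Nat.choose t u : ℂ) / t * (Nat.choose (n - t) r : ℂ) * (a ^ u * b ^ (n - r - u)) := by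
    intro u hu
    rw [mem_Icc] at hu
    rw [← Finset.sum_mul, inner_conv n r u hu.1 hu.2 hrn,
      show u + r = r + u from by omega]
    ring
  rw [Finset.sum_congr rfl hL]
  have hR : ∀ t ∈ Finset.Icc 1 (n - r),
      ((a + b) ^ t - b ^ t) * b ^ (n - r - t) * (Nat.choose (n - t) r : ℂ) / t
      = ∑ i ∈ Finset.Icc 1 t,
          (Nat.choose t i : ℂ) / t * (Nat.choose (n - t) r : ℂ) * (a ^ i * b ^ (n - r - i)) := by
    intro t ht
    rw [mem_Icc] at ht
    rw [add_pow_sub, Finset.sum_mul, Finset.sum_mul, Finset.sum_div]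
    apply Finset.sum_congr rfl
    intro i hi
    rw [mem_Icc] at hi
    have hbp : b ^ (t - i) * b ^ (n - r - t) = b ^ (n - r - i) := by
      rw [← pow_add]; congr 1; omega
    rw [← hbp]
    ring
  rw [Finset.sum_congr rfl hR]
  apply Finset.sum_comm'
  intro u t
  rw [mem_Icc, mem_Icc, mem_Icc, mem_Icc]
  omega
noncomputable section

def gs (c : ℂ) : ℂ⟦X⟧ := PowerSeries.mk fun n => c ^ n

def ell (c : ℂ) : ℂ⟦X⟧ := PowerSeries.mk fun n => if n = 0 then 0 else c ^ n / n

lemma gs_unit (c : ℂ) : (1 - PowerSeries.C c * X) * gs c = 1 := by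
  ext n
  rw [sub_mul, one_mul, map_sub, mul_assoc]
  cases n with
  | zero => simp [gs]
  | succ n =>
    rw [PowerSeries.coeff_C_mul, PowerSeries.coeff_succ_X_mul]
    simp [gs, PowerSeries.coeff_one, pow_succ]
    ring

lemma D_ell (c : ℂ) : (d⁄dX ℂ) (ell c) = PowerSeries.C c * gs c := by
  ext n
  rw [PowerSeries.coeff_derivative, PowerSeries.coeff_C_mul]
  simp only [ell, gs, coeff_mk, Nat.succ_ne_zero, if_false]
  have hn : ((n : ℂ) + 1) ≠ 0 := Nat.cast_add_one_ne_zero n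
  push_cast
  field_simp
  ring

def Sser (c : ℂ) (k : ℕ) : ℂ⟦X⟧ :=
  PowerSeries.mk fun r =>
    (k.factorial : ℂ) / (r.factorial : ℂ) * (-1) ^ r * c ^ r * (stirlingFirst r k : ℂ)

lemma Sser_zero (c : ℂ) : Sser c 0 = 1 := by
  ext r
  cases r with
  | zero => simp [Sser, stirlingFirst]
  | succ r => simp [Sser, stirlingFirst, PowerSeries.coeff_one]

lemma Sser_deriv (c : ℂ) (k : ℕ) :
    (1 - PowerSeries.C c * X) * (d⁄dX ℂ) (Sser c (k + 1)) =
      PowerSeries.C (-((k : ℂ) + 1) * c) * Sser c k := by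
  ext n
  rw [sub_mul, one_mul, map_sub, mul_assoc, PowerSeries.coeff_C_mul, PowerSeries.coeff_C_mul]
  have hfac : ∀ j : ℕ, ((j.factorial : ℂ)) ≠ 0 := fun j => by
    exact_mod_cast Nat.factorial_ne_zero j
  cases n with
  | zero =>
    rw [PowerSeries.coeff_zero_X_mul]
    simp only [PowerSeries.coeff_derivative, Sser, coeff_mk]
    cases k with
    | zero => simp [stirlingFirst]
    | succ k => simp [stirlingFirst]
  | succ n =>
    rw [PowerSeries.coeff_succ_X_mul]
    simp only [PowerSeries.coeff_derivative, Sser, coeff_mk]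
    have hrec : (stirlingFirst (n + 1 + 1) (k + 1) : ℂ)
        = (stirlingFirst (n + 1) k : ℂ) - ((n : ℂ) + 1) * (stirlingFirst (n + 1) (k + 1) : ℂ) := by
      rw [show stirlingFirst (n + 1 + 1) (k + 1) = stirlingFirst (n + 1) k
        - (n + 1) * stirlingFirst (n + 1) (k + 1) by simp [stirlingFirst]]
      push_cast
      ring
    rw [hrec]
    have h1 : ((n + 1 + 1).factorial : ℂ) = ((n : ℂ) + 2) * ((n + 1).factorial : ℂ) := by
      rw [Nat.factorial_succ (n + 1)]; push_cast; ring
    have h2 : ((n + 1).factorial : ℂ) = ((n : ℂ) + 1) * ((n).factorial : ℂ) := by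
      rw [Nat.factorial_succ n]; push_cast; ring
    have h3 : ((k + 1).factorial : ℂ) = ((k : ℂ) + 1) * ((k).factorial : ℂ) := by
      rw [Nat.factorial_succ k]; push_cast; ring
    rw [h1, h2, h3]
    have hn2 : ((n : ℂ) + 2) ≠ 0 := by
      intro h
      have : ((n : ℂ) + 2) = ((n + 2 : ℕ) : ℂ) := by push_cast; ring
      rw [this] at h
      exact_mod_cast h
    have hn1 : ((n : ℂ) + 1) ≠ 0 := Nat.cast_add_one_ne_zero n
    have hnf := hfac n
    have hkf := hfac k
    push_cast
    field_simp
    ring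


lemma oneSub_isUnit (c : ℂ) : IsUnit (1 - PowerSeries.C c * X) :=
  IsUnit.of_mul_eq_one _ (gs_unit c)

lemma constantCoeff_ell (c : ℂ) : constantCoeff (ell c) = 0 := by
  rw [← PowerSeries.coeff_zero_eq_constantCoeff]
  simp [ell]

lemma Sser_eq (c : ℂ) (k : ℕ) : Sser c k = (-(ell c)) ^ k := by
  induction k with
  | zero => rw [Sser_zero, pow_zero]
  | succ k ih =>
    apply PowerSeries.derivative.ext
    · apply (oneSub_isUnit c).mul_left_cancel
      rw [Sser_deriv c k, ih]
      rw [Derivation.leibniz_pow]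
      rw [Nat.add_sub_cancel]
      rw [map_neg, D_ell]
      rw [nsmul_eq_mul, smul_eq_mul]
      have hstep : (1 - PowerSeries.C c * X) * (((k + 1 : ℕ) : ℂ⟦X⟧) * ((-(ell c)) ^ k * -(PowerSeries.C c * gs c)))
          = ((k + 1 : ℕ) : ℂ⟦X⟧) * ((-(ell c)) ^ k * -(PowerSeries.C c * ((1 - PowerSeries.C c * X) * gs c))) := by
        ring
      rw [hstep, gs_unit]
      have hC : (-((k : ℂ) + 1) * c) = (-(((k + 1 : ℕ) : ℂ))) * c := by push_cast; ring
      rw [hC, map_mul, map_neg, map_natCast]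
      ring
    · rw [map_pow, map_neg, constantCoeff_ell, ← PowerSeries.coeff_zero_eq_constantCoeff]
      simp [Sser, stirlingFirst]
lemma sum_range_succ_eq_Icc {M : Type*} [AddCommMonoid M] (n : ℕ) (f : ℕ → M)
    (h0 : f 0 = 0) : ∑ i ∈ Finset.range (n + 1), f i = ∑ i ∈ Finset.Icc 1 n, f i := by
  symm
  apply Finset.sum_subset
  · intro i hi
    rw [mem_Icc] at hi
    rw [Finset.mem_range]
    omega
  · intro i hi hni
    rw [Finset.mem_range] at hi
    rw [mem_Icc] at hni
    have : i = 0 := by omega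
    rw [this, h0]

def Hser (c : ℂ) (m : ℕ) : ℂ⟦X⟧ := PowerSeries.mk fun n => (Hml n m : ℂ) * c ^ n

lemma Hser_eq (c : ℂ) (m : ℕ) : Hser c m = (ell c) ^ m * gs c := by
  induction m with
  | zero =>
    ext n
    simp [Hser, gs, Hml_zero]
  | succ m ih =>
    have : (ell c) ^ (m + 1) * gs c = ell c * Hser c m := by
      rw [ih, pow_succ]; ring
    rw [this]
    ext n
    rw [PowerSeries.coeff_mul, Finset.Nat.sum_antidiagonal_eq_sum_range_succ_mk]
    simp only [Hser, ell, coeff_mk]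
    rw [sum_range_succ_eq_Icc n _ (by simp)]
    have hcast : (Hml n (m + 1) : ℂ) = ∑ t ∈ Finset.Icc 1 n, (1 / (t : ℂ)) * (Hml (n - t) m : ℂ) := by
      have h := Hml_succ n m
      have : ((Hml n (m + 1) : ℚ) : ℂ) = ((∑ t ∈ Finset.Icc 1 n, (1 / (t : ℚ)) * Hml (n - t) m : ℚ) : ℂ) := by
        exact_mod_cast congrArg (fun q : ℚ => (q : ℂ)) h
      rw [this]
      push_cast
      rfl
    rw [hcast, Finset.sum_mul]
    apply Finset.sum_congr rfl
    intro i hi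
    rw [mem_Icc] at hi
    have hi0 : i ≠ 0 := by omega
    rw [if_neg hi0]
    have hpow : c ^ i * c ^ (n - i) = c ^ n := by
      rw [← pow_add]
      congr 1
      omega
    field_simp
    rw [← hpow]
    ring

lemma Hml_succ_C (n m : ℕ) : ((Hml n (m + 1) : ℚ) : ℂ)
    = ∑ t ∈ Finset.Icc 1 n, (1 / (t : ℂ)) * ((Hml (n - t) m : ℚ) : ℂ) := by
  have h := Hml_succ n m
  have h2 : ((Hml n (m + 1) : ℚ) : ℂ)
      = ((∑ t ∈ Finset.Icc 1 n, (1 / (t : ℚ)) * Hml (n - t) m : ℚ) : ℂ) := by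
    exact_mod_cast congrArg (fun q : ℚ => (q : ℂ)) h
  rw [h2]
  push_cast
  rfl

lemma Mlem (a b : ℂ) (m : ℕ) : ∀ n : ℕ,
    ∑ k ∈ Finset.range (n + 1), (n.choose k : ℂ) * a ^ k * b ^ (n - k) * (Hml k m : ℂ)
      = PowerSeries.coeff n ((ell (a + b) - ell b) ^ m * gs (a + b)) := by
  induction m with
  | zero =>
    intro n
    rw [pow_zero, one_mul]
    have h1 : ∀ k ∈ Finset.range (n + 1),
        (n.choose k : ℂ) * a ^ k * b ^ (n - k) * (Hml k 0 : ℂ)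
          = a ^ k * b ^ (n - k) * (n.choose k : ℂ) := by
      intro k _
      rw [Hml_zero]
      push_cast
      ring
    rw [Finset.sum_congr rfl h1, ← add_pow]
    simp [gs]
  | succ m ih =>
    intro n
    -- coefficient side
    have hpow : (ell (a + b) - ell b) ^ (m + 1) * gs (a + b)
        = (ell (a + b) - ell b) * ((ell (a + b) - ell b) ^ m * gs (a + b)) := by
      ring
    have hc0 : (PowerSeries.coeff 0) (ell (a + b) - ell b) = 0 := by
      rw [map_sub]; simp [ell]
    have hcoeff : PowerSeries.coeff n ((ell (a + b) - ell b) ^ (m + 1) * gs (a + b))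
        = ∑ t ∈ Finset.Icc 1 n, (((a + b) ^ t - b ^ t) / (t : ℂ)) *
            ∑ k ∈ Finset.range (n + 1),
              (Nat.choose (n - t) k : ℂ) * a ^ k * b ^ (n - t - k) * (Hml k m : ℂ) := by
      rw [hpow, PowerSeries.coeff_mul, Finset.Nat.sum_antidiagonal_eq_sum_range_succ_mk]
      rw [sum_range_succ_eq_Icc n _ (by rw [hc0, zero_mul])]
      apply Finset.sum_congr rfl
      intro t ht
      rw [mem_Icc] at ht
      have ht0 : t ≠ 0 := by omega
      have hct : (PowerSeries.coeff t) (ell (a + b) - ell b)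
          = ((a + b) ^ t - b ^ t) / (t : ℂ) := by
        rw [map_sub]
        simp only [ell, PowerSeries.coeff_mk, if_neg ht0]
        rw [← sub_div]
      rw [hct, ← ih (n - t)]
      congr 1
      -- extend inner range (n - t + 1) to (n + 1)
      apply Finset.sum_subset
      · intro k hk
        rw [Finset.mem_range] at hk ⊢
        omega
      · intro k hk hnk
        rw [Finset.mem_range] at hk hnk
        rw [Nat.choose_eq_zero_of_lt (by omega)]
        push_cast
        ring
    rw [hcoeff]
    -- LHS side: apply Hml recurrence
    have hlhs : ∑ k ∈ Finset.range (n + 1),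
        (n.choose k : ℂ) * a ^ k * b ^ (n - k) * (Hml k (m + 1) : ℂ)
        = ∑ k ∈ Finset.range (n + 1), ∑ u ∈ Finset.Icc 1 k,
            (n.choose k : ℂ) * a ^ k * b ^ (n - k) * ((1 / (u : ℂ)) * (Hml (k - u) m : ℂ)) := by
      apply Finset.sum_congr rfl
      intro k _
      rw [Hml_succ_C, Finset.mul_sum]
    rw [hlhs]
    -- sigma form of LHS
    rw [Finset.sum_sigma']
    -- convert RHS to sigma form
    have hswap : ∑ t ∈ Finset.Icc 1 n, (((a + b) ^ t - b ^ t) / (t : ℂ)) *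
            ∑ k ∈ Finset.range (n + 1),
              (Nat.choose (n - t) k : ℂ) * a ^ k * b ^ (n - t - k) * (Hml k m : ℂ)
        = ∑ k ∈ Finset.range (n + 1), ∑ u ∈ Finset.Icc 1 (n - k),
            (Nat.choose n (k + u) : ℂ) * a ^ u * b ^ (n - k - u) / u * (a ^ k * (Hml k m : ℂ)) := by
      have h1 : ∀ t ∈ Finset.Icc 1 n, (((a + b) ^ t - b ^ t) / (t : ℂ)) *
            ∑ k ∈ Finset.range (n + 1),
              (Nat.choose (n - t) k : ℂ) * a ^ k * b ^ (n - t - k) * (Hml k m : ℂ)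
          = ∑ k ∈ Finset.range (n + 1), (((a + b) ^ t - b ^ t) / (t : ℂ)) *
              ((Nat.choose (n - t) k : ℂ) * a ^ k * b ^ (n - t - k) * (Hml k m : ℂ)) := by
        intro t _
        rw [Finset.mul_sum]
      rw [Finset.sum_congr rfl h1, Finset.sum_comm]
      apply Finset.sum_congr rfl
      intro k hk
      rw [Finset.mem_range] at hk
      have hkn : k ≤ n := by omega
      -- restrict t to Icc 1 (n - k)
      have h2 : ∑ t ∈ Finset.Icc 1 n, (((a + b) ^ t - b ^ t) / (t : ℂ)) *
              ((Nat.choose (n - t) k : ℂ) * a ^ k * b ^ (n - t - k) * (Hml k m : ℂ))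
          = ∑ t ∈ Finset.Icc 1 (n - k), (((a + b) ^ t - b ^ t) * b ^ (n - k - t)
              * (Nat.choose (n - t) k : ℂ) / t) * (a ^ k * (Hml k m : ℂ)) := by
        rw [← Finset.sum_subset (s₁ := Finset.Icc 1 (n - k)) (by intro t ht; rw [mem_Icc] at ht ⊢; omega)
          (by intro t ht hnt
              rw [mem_Icc] at ht hnt
              rw [Nat.choose_eq_zero_of_lt (by omega)]
              push_cast
              ring)]
        apply Finset.sum_congr rfl
        intro t ht
        rw [mem_Icc] at ht
        rw [show n - t - k = n - k - t from by omega]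
        ring
      rw [h2, ← Finset.sum_mul, ← dagger a b n k hkn, Finset.sum_mul]
    rw [hswap, Finset.sum_sigma']
    -- bijection between sigma sets
    symm
    refine Finset.sum_nbij' (fun p => ⟨p.1 + p.2, p.2⟩) (fun p => ⟨p.1 - p.2, p.2⟩) ?_ ?_ ?_ ?_ ?_
    · rintro ⟨k, u⟩ hp
      simp only [Finset.mem_sigma, Finset.mem_range, mem_Icc] at hp ⊢
      omega
    · rintro ⟨K, u⟩ hp
      simp only [Finset.mem_sigma, Finset.mem_range, mem_Icc] at hp ⊢
      omega
    · rintro ⟨k, u⟩ hp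
      simp only [Finset.mem_sigma, Finset.mem_range, mem_Icc] at hp
      have h : k + u - u = k := by omega
      simp [h]
    · rintro ⟨K, u⟩ hp
      simp only [Finset.mem_sigma, Finset.mem_range, mem_Icc] at hp
      have h : K - u + u = K := by omega
      simp [h]
    · rintro ⟨k, u⟩ hp
      simp only [Finset.mem_sigma, Finset.mem_range, mem_Icc] at hp
      simp only
      rw [show k + u - u = k from by omega, show n - (k + u) = n - k - u from by omega,
        pow_add]
      ring

end

end AuxLemmas

theorem stmt_1 (a b : ℂ) (n m : ℕ) :
    ∑ k ∈ Finset.range (n + 1),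
        (n.choose k : ℂ) * a ^ k * b ^ (n - k) * (Hml k m : ℂ) =
      ∑ j ∈ Finset.range (m + 1), (m.choose j : ℂ) *
        ∑ k ∈ Finset.range (n + 1),
          (Hml k j : ℂ) * (a + b) ^ k *
            (((m - j).factorial : ℂ) / ((n - k).factorial : ℂ)) *
            (-1) ^ (n - k) * b ^ (n - k) * (stirlingFirst (n - k) (m - j) : ℂ) := by
  have key : ∑ j ∈ Finset.range (m + 1),
      (PowerSeries.C ((m.choose j : ℕ) : ℂ)) * (Hser (a + b) j * Sser b (m - j))
      = (ell (a + b) - ell b) ^ m * gs (a + b) := by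
    have h1 : ∀ j ∈ Finset.range (m + 1),
        (PowerSeries.C ((m.choose j : ℕ) : ℂ)) * (Hser (a + b) j * Sser b (m - j))
        = (ell (a + b)) ^ j * (-(ell b)) ^ (m - j) * ((m.choose j : ℕ) : PowerSeries ℂ) * gs (a + b) := by
      intro j _
      rw [Hser_eq, Sser_eq, map_natCast]
      ring
    rw [Finset.sum_congr rfl h1, ← Finset.sum_mul]
    congr 1
    rw [← add_pow, ← sub_eq_add_neg]
  have hterm : ∀ j ∈ Finset.range (m + 1),
      PowerSeries.coeff n ((PowerSeries.C ((m.choose j : ℕ) : ℂ)) * (Hser (a + b) j * Sser b (m - j)))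
      = (m.choose j : ℂ) * ∑ k ∈ Finset.range (n + 1),
          (Hml k j : ℂ) * (a + b) ^ k *
            (((m - j).factorial : ℂ) / ((n - k).factorial : ℂ)) *
            (-1) ^ (n - k) * b ^ (n - k) * (stirlingFirst (n - k) (m - j) : ℂ) := by
    intro j _
    rw [PowerSeries.coeff_C_mul, PowerSeries.coeff_mul,
      Finset.Nat.sum_antidiagonal_eq_sum_range_succ_mk]
    congr 1
    apply Finset.sum_congr rfl
    intro k _
    simp only [Hser, Sser, PowerSeries.coeff_mk]
    ring
  calc ∑ k ∈ Finset.range (n + 1), (n.choose k : ℂ) * a ^ k * b ^ (n - k) * (Hml k m : ℂ)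
      = PowerSeries.coeff n ((ell (a + b) - ell b) ^ m * gs (a + b)) := Mlem a b m n
    _ = PowerSeries.coeff n (∑ j ∈ Finset.range (m + 1),
          (PowerSeries.C ((m.choose j : ℕ) : ℂ)) * (Hser (a + b) j * Sser b (m - j))) := by
        rw [key]
    _ = ∑ j ∈ Finset.range (m + 1), PowerSeries.coeff n
          ((PowerSeries.C ((m.choose j : ℕ) : ℂ)) * (Hser (a + b) j * Sser b (m - j))) :=
        map_sum _ _ _
    _ = _ := Finset.sum_congr rfl hterm
end

section
/- For all complex numbers a, b and all integers n ≥ 0: Σ_{k=0}^{n} C(n,k) a^k b^{n−k} H_k(2) = H_n(2)·(a+b)^n + 2 Σ_{k=1}^{n} (a+b)^{n−k} b^k (H_{k−1} − H_{n−k})/k. -/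
open Finset

/-! ### Auxiliary lemmas -/

lemma aux_sum_Icc_one {M : Type*} [AddCommMonoid M] (m : ℕ) (f : ℕ → M) :
    ∑ k ∈ Icc 1 m, f k = ∑ k ∈ range m, f (k + 1) := by
  induction m with
  | zero => simp
  | succ m ih => rw [Finset.sum_Icc_succ_top (by omega), ih, Finset.sum_range_succ]

lemma aux_range_succ_sum {M : Type*} [AddCommMonoid M] (m : ℕ) (f : ℕ → M) :
    ∑ k ∈ range (m + 1), f k = f 0 + ∑ k ∈ Icc 1 m, f k := by
  rw [aux_sum_Icc_one, Finset.sum_range_succ', add_comm]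

lemma aux_harm_zero : harm 0 = 0 := by simp [harm]

lemma aux_harm_succ (n : ℕ) : harm (n + 1) = harm n + 1 / (n + 1) := by
  rw [harm, harm, Finset.sum_Icc_succ_top (by omega)]; push_cast; ring

lemma aux_harm_succ_c (n : ℕ) : ((harm (n + 1) : ℚ) : ℂ) = (harm n : ℂ) + 1 / ((n : ℂ) + 1) := by
  have := congrArg (fun q : ℚ => (q : ℂ)) (aux_harm_succ n)
  push_cast at this ⊢
  simpa using this

lemma aux_harm_c (n : ℕ) : ((harm n : ℚ) : ℂ) = ∑ j ∈ Icc 1 n, ((j : ℂ))⁻¹ := by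
  rw [harm]; push_cast; simp [one_div]

lemma aux_hml2_eq (n : ℕ) : Hml n 2 = ∑ k ∈ Icc 1 n, (1 / (k : ℚ)) * harm (n - k) := by
  rw [Hml]
  rw [Finset.sum_nbij' (i := fun k : Fin 2 → ℕ => (k 0, k 1))
    (j := fun p : ℕ × ℕ => ![p.1, p.2])
    (t := (Icc 1 n ×ˢ Icc 1 n).filter fun p => p.1 + p.2 ≤ n)
    (g := fun p => (1 / (p.1 : ℚ)) * (1 / (p.2 : ℚ)))]
  · rw [Finset.sum_filter, Finset.sum_product]
    refine Finset.sum_congr rfl fun x hx => ?_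
    have hx1 : 1 ≤ x ∧ x ≤ n := by simpa using hx
    have : ∑ y ∈ Icc 1 n, (if x + y ≤ n then (1/(x:ℚ)) * (1/(y:ℚ)) else 0)
        = ∑ y ∈ Icc 1 (n - x), (1/(x:ℚ)) * (1/(y:ℚ)) := by
      rw [← Finset.sum_filter]
      apply Finset.sum_congr _ fun _ _ => rfl
      ext y
      simp only [Finset.mem_filter, Finset.mem_Icc]
      omega
    rw [this, harm, Finset.mul_sum]
  · intro k hk
    simp only [Finset.mem_filter, Fintype.mem_piFinset] at hk
    simp only [Finset.mem_filter, Finset.mem_product]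
    refine ⟨⟨hk.1 0, hk.1 1⟩, ?_⟩
    have := hk.2
    rwa [Fin.sum_univ_two] at this
  · intro p hp
    simp only [Finset.mem_filter, Finset.mem_product] at hp
    simp only [Finset.mem_filter, Fintype.mem_piFinset]
    constructor
    · intro i; fin_cases i <;> simp [hp.1.1, hp.1.2]
    · rw [Fin.sum_univ_two]; simpa using hp.2
  · intro k _; ext i; fin_cases i <;> simp
  · intro p _; simp
  · intro k _; rw [Fin.prod_univ_two]

lemma aux_harm_reflect (n : ℕ) :
    ∑ k ∈ Icc 1 n, (1 : ℚ) / ((n + 1 - k : ℕ) : ℚ) = harm n := by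
  rw [harm]
  apply Finset.sum_nbij' (i := fun k => n + 1 - k) (j := fun k => n + 1 - k) <;>
    (intro k hk; simp only [Finset.mem_Icc] at *) <;> omega

lemma aux_hml2_succ (n : ℕ) : Hml (n + 1) 2 = Hml n 2 + 2 * harm n / (n + 1) := by
  rw [aux_hml2_eq, aux_hml2_eq, Finset.sum_Icc_succ_top (by omega)]
  simp only [Nat.sub_self, aux_harm_zero, mul_zero, add_zero]
  have step : ∀ k ∈ Icc 1 n, (1 / (k : ℚ)) * harm (n + 1 - k)
      = (1 / (k : ℚ)) * harm (n - k) + (1/(n+1)) * (1/(k:ℚ) + 1 / ((n + 1 - k : ℕ) : ℚ)) := by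
    intro k hk
    simp only [Finset.mem_Icc] at hk
    have h1 : n + 1 - k = (n - k) + 1 := by omega
    rw [h1, aux_harm_succ]
    have h2 : ((n - k : ℕ) : ℚ) = (n : ℚ) - k := by
      push_cast [Nat.cast_sub hk.2]; ring
    push_cast [h2]
    have hk0 : (k : ℚ) ≠ 0 := by
      have : (0:ℚ) < k := by exact_mod_cast hk.1
      linarith
    have hnk : (n : ℚ) - k + 1 ≠ 0 := by
      have : (k:ℚ) ≤ n := by exact_mod_cast hk.2
      linarith
    have hn1 : (n : ℚ) + 1 ≠ 0 := by positivity
    field_simp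
    ring
  rw [Finset.sum_congr rfl step, Finset.sum_add_distrib, ← Finset.mul_sum,
    Finset.sum_add_distrib, aux_harm_reflect, ← harm]
  ring

lemma aux_hml2_succ_c (n : ℕ) :
    ((Hml (n + 1) 2 : ℚ) : ℂ) = (Hml n 2 : ℂ) + 2 * (harm n : ℂ) / ((n : ℂ) + 1) := by
  have := congrArg (fun q : ℚ => (q : ℂ)) (aux_hml2_succ n)
  push_cast at this ⊢
  simpa using this

lemma aux_pascal_step (a b : ℂ) (f : ℕ → ℂ) (n : ℕ) :
    ∑ k ∈ range (n + 2), ((n+1).choose k : ℂ) * a ^ k * b ^ (n + 1 - k) * f k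
      = b * ∑ k ∈ range (n + 1), (n.choose k : ℂ) * a ^ k * b ^ (n - k) * f k
        + a * ∑ k ∈ range (n + 1), (n.choose k : ℂ) * a ^ k * b ^ (n - k) * f (k + 1) := by
  rw [Finset.sum_range_succ']
  have pas : ∀ k, (((n+1).choose (k+1) : ℕ) : ℂ) = (n.choose k : ℂ) + (n.choose (k+1) : ℂ) := by
    intro k; rw [Nat.choose_succ_succ]; push_cast; ring
  have split : ∀ k ∈ range (n + 1),
      ((n+1).choose (k+1) : ℂ) * a ^ (k+1) * b ^ (n + 1 - (k+1)) * f (k+1)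
      = a * ((n.choose k : ℂ) * a ^ k * b ^ (n - k) * f (k+1))
        + (n.choose (k+1) : ℂ) * a ^ (k+1) * b ^ (n + 1 - (k+1)) * f (k+1) := by
    intro k hk
    rw [pas]
    have : n + 1 - (k + 1) = n - k := by omega
    rw [this]; ring
  rw [Finset.sum_congr rfl split, Finset.sum_add_distrib, ← Finset.mul_sum]
  have e2 : ∑ k ∈ range (n + 1), (n.choose (k+1) : ℂ) * a ^ (k+1) * b ^ (n + 1 - (k+1)) * f (k+1)
        + ((n+1).choose 0 : ℂ) * a ^ 0 * b ^ (n + 1 - 0) * f 0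
      = ∑ k ∈ range (n + 1), (n.choose k : ℂ) * a ^ k * b ^ (n + 1 - k) * f k := by
    have := Finset.sum_range_succ' (fun k => (n.choose k : ℂ) * a ^ k * b ^ (n + 1 - k) * f k) (n+1)
    rw [Finset.sum_range_succ, Nat.choose_succ_self] at this
    simpa using this.symm
  rw [add_assoc, e2]
  have last : ∀ k ∈ range (n+1), (n.choose k : ℂ) * a ^ k * b ^ (n + 1 - k) * f k
      = b * ((n.choose k : ℂ) * a ^ k * b ^ (n - k) * f k) := by
    intro k hk
    simp only [Finset.mem_range] at hk
    have : n + 1 - k = (n - k) + 1 := by omega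
    rw [this, pow_succ]; ring
  rw [Finset.sum_congr rfl last, ← Finset.mul_sum]
  ring

lemma aux_binom_exp (a b : ℂ) (m : ℕ) :
    ∑ k ∈ range (m + 1), (m.choose k : ℂ) * a ^ k * b ^ (m - k) = (a + b) ^ m := by
  rw [add_pow]
  exact Finset.sum_congr rfl fun k _ => by ring

lemma aux_binom_tail (a b : ℂ) (m : ℕ) :
    ∑ k ∈ range (m + 1), ((m + 1).choose (k + 1) : ℂ) * a ^ (k + 1) * b ^ (m - k)
      = (a + b) ^ (m + 1) - b ^ (m + 1) := by
  have h := aux_binom_exp a b (m + 1)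
  rw [Finset.sum_range_succ'] at h
  have : ∀ k ∈ range (m + 1),
      ((m+1).choose (k+1) : ℂ) * a ^ (k+1) * b ^ (m + 1 - (k+1))
      = ((m+1).choose (k+1) : ℂ) * a ^ (k+1) * b ^ (m - k) := by
    intro k _
    congr 2
    omega
  rw [Finset.sum_congr rfl this] at h
  simp only [Nat.choose_zero_right, pow_zero, Nat.sub_zero, Nat.cast_one] at h
  linear_combination h

lemma aux_sum_choose_div (a b : ℂ) (m : ℕ) :
    ∑ k ∈ range (m + 1), (m.choose k : ℂ) * a ^ (k + 1) * b ^ (m - k) / (k + 1)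
      = ((a + b) ^ (m + 1) - b ^ (m + 1)) / (m + 1) := by
  rw [← aux_binom_tail a b m, Finset.sum_div]
  refine Finset.sum_congr rfl fun k _ => ?_
  have key : ((m+1).choose (k+1) : ℂ) * ((k : ℂ) + 1) = ((m : ℂ) + 1) * (m.choose k : ℂ) := by
    exact_mod_cast (Nat.add_one_mul_choose_eq m k).symm
  have hk : ((k : ℂ) + 1) ≠ 0 := Nat.cast_add_one_ne_zero k
  have hm : ((m : ℂ) + 1) ≠ 0 := Nat.cast_add_one_ne_zero m
  rw [div_eq_div_iff hk hm]
  linear_combination (-(a ^ (k+1) * b ^ (m-k))) * key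

lemma aux_L1 (a b : ℂ) (n : ℕ) :
    ∑ k ∈ range (n + 1), (n.choose k : ℂ) * a ^ k * b ^ (n - k) * (harm k : ℂ)
      = (a + b) ^ n * (harm n : ℂ) - ∑ k ∈ Icc 1 n, (a + b) ^ (n - k) * b ^ k / (k : ℂ) := by
  induction n with
  | zero => simp [harm]
  | succ n ih =>
    rw [aux_pascal_step]
    have e1 : ∑ k ∈ range (n + 1), (n.choose k : ℂ) * a ^ k * b ^ (n - k) * (harm (k+1) : ℂ)
        = ∑ k ∈ range (n + 1), (n.choose k : ℂ) * a ^ k * b ^ (n - k) * (harm k : ℂ)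
          + ∑ k ∈ range (n + 1), (n.choose k : ℂ) * a ^ k * b ^ (n - k) / ((k : ℂ) + 1) := by
      rw [← Finset.sum_add_distrib]
      refine Finset.sum_congr rfl fun k _ => ?_
      rw [aux_harm_succ_c]; ring
    rw [e1, mul_add, ih]
    have e2 : a * ∑ k ∈ range (n + 1), (n.choose k : ℂ) * a ^ k * b ^ (n - k) / ((k : ℂ) + 1)
        = ((a + b) ^ (n + 1) - b ^ (n + 1)) / ((n : ℂ) + 1) := by
      rw [← aux_sum_choose_div a b n, Finset.mul_sum]
      exact Finset.sum_congr rfl fun k _ => by ring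
    rw [e2]
    rw [Finset.sum_Icc_succ_top (show 1 ≤ n + 1 by omega), aux_harm_succ_c]
    have e3 : ∑ k ∈ Icc 1 n, (a + b) ^ (n + 1 - k) * b ^ k / (k : ℂ)
        = (a + b) * ∑ k ∈ Icc 1 n, (a + b) ^ (n - k) * b ^ k / (k : ℂ) := by
      rw [Finset.mul_sum]
      refine Finset.sum_congr rfl fun k hk => ?_
      simp only [Finset.mem_Icc] at hk
      rw [show n + 1 - k = (n - k) + 1 by omega, pow_succ]
      ring
    rw [e3]
    push_cast
    simp only [Nat.sub_self, pow_zero]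
    ring

lemma aux_L3 (a b : ℂ) (m : ℕ) :
    ∑ k ∈ range (m + 1), (m.choose k : ℂ) * a ^ k * b ^ (m - k) * ((k : ℂ))⁻¹
      = ∑ j ∈ range (m + 1), ((a + b) ^ j - b ^ j) * b ^ (m - j) * ((j : ℂ))⁻¹ := by
  induction m with
  | zero => simp
  | succ m ih =>
    rw [aux_pascal_step]
    have e2 : a * ∑ k ∈ range (m + 1), (m.choose k : ℂ) * a ^ k * b ^ (m - k) * (((k+1 : ℕ) : ℂ))⁻¹
        = ((a + b) ^ (m + 1) - b ^ (m + 1)) / ((m : ℂ) + 1) := by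
      rw [← aux_sum_choose_div a b m, Finset.mul_sum]
      refine Finset.sum_congr rfl fun k _ => ?_
      push_cast
      rw [div_eq_mul_inv]
      ring
    rw [e2, ih, Finset.sum_range_succ
      (fun j => ((a + b) ^ j - b ^ j) * b ^ (m + 1 - j) * ((j : ℂ))⁻¹) (m+1)]
    have e3 : ∑ j ∈ range (m + 1), ((a + b) ^ j - b ^ j) * b ^ (m + 1 - j) * ((j : ℂ))⁻¹
        = b * ∑ j ∈ range (m + 1), ((a + b) ^ j - b ^ j) * b ^ (m - j) * ((j : ℂ))⁻¹ := by
      rw [Finset.mul_sum]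
      refine Finset.sum_congr rfl fun j hj => ?_
      simp only [Finset.mem_range] at hj
      rw [show m + 1 - j = (m - j) + 1 by omega, pow_succ]
      ring
    rw [e3]
    simp only [Nat.sub_self, pow_zero, div_eq_mul_inv]
    push_cast
    ring

lemma aux_TT (a b : ℂ) (n : ℕ) :
    ∑ k ∈ Icc 1 (n + 1), ((n+1).choose k : ℂ) * a ^ k * b ^ (n + 1 - k) * (harm (k - 1) : ℂ)
      = (harm n : ℂ) * ((a + b) ^ (n + 1) + b ^ (n + 1))
        - ∑ k ∈ Icc 1 n, (a + b) ^ (n + 1 - k) * b ^ k * ((k : ℂ))⁻¹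
        - ∑ k ∈ Icc 1 n, (a + b) ^ k * b ^ (n + 1 - k) * ((k : ℂ))⁻¹ := by
  have split : ∀ k ∈ Icc 1 (n + 1),
      ((n+1).choose k : ℂ) * a ^ k * b ^ (n + 1 - k) * (harm (k - 1) : ℂ)
      = ((n+1).choose k : ℂ) * a ^ k * b ^ (n + 1 - k) * (harm k : ℂ)
        - ((n+1).choose k : ℂ) * a ^ k * b ^ (n + 1 - k) * ((k : ℂ))⁻¹ := by
    intro k hk
    simp only [Finset.mem_Icc] at hk
    obtain ⟨j, rfl⟩ : ∃ j, k = j + 1 := ⟨k - 1, by omega⟩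
    rw [show j + 1 - 1 = j from rfl, aux_harm_succ_c]
    push_cast
    rw [one_div]
    ring
  rw [Finset.sum_congr rfl split, Finset.sum_sub_distrib]
  have h1 : ∑ k ∈ Icc 1 (n + 1), ((n+1).choose k : ℂ) * a ^ k * b ^ (n + 1 - k) * (harm k : ℂ)
      = (a + b) ^ (n + 1) * (harm (n+1) : ℂ)
        - ∑ k ∈ Icc 1 (n + 1), (a + b) ^ (n + 1 - k) * b ^ k / (k : ℂ) := by
    rw [← aux_L1 a b (n+1), aux_range_succ_sum (n+1)
      (fun k => ((n+1).choose k : ℂ) * a ^ k * b ^ (n + 1 - k) * (harm k : ℂ))]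
    simp [aux_harm_zero]
  have h2 : ∑ k ∈ Icc 1 (n + 1), ((n+1).choose k : ℂ) * a ^ k * b ^ (n + 1 - k) * ((k : ℂ))⁻¹
      = ∑ j ∈ Icc 1 (n + 1), ((a + b) ^ j - b ^ j) * b ^ (n + 1 - j) * ((j : ℂ))⁻¹ := by
    have := aux_L3 a b (n+1)
    rw [aux_range_succ_sum (n+1)
        (fun k => ((n+1).choose k : ℂ) * a ^ k * b ^ (n + 1 - k) * ((k : ℂ))⁻¹),
      aux_range_succ_sum (n+1)
        (fun j => ((a + b) ^ j - b ^ j) * b ^ (n + 1 - j) * ((j : ℂ))⁻¹)] at this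
    simpa using this
  rw [h1, h2]
  rw [Finset.sum_Icc_succ_top (show 1 ≤ n + 1 by omega)
      (fun k => (a + b) ^ (n + 1 - k) * b ^ k / (k : ℂ)),
    Finset.sum_Icc_succ_top (show 1 ≤ n + 1 by omega)
      (fun j => ((a + b) ^ j - b ^ j) * b ^ (n + 1 - j) * ((j : ℂ))⁻¹),
    aux_harm_succ_c]
  have e1 : ∑ k ∈ Icc 1 n, (a + b) ^ (n + 1 - k) * b ^ k / (k : ℂ)
      = ∑ k ∈ Icc 1 n, (a + b) ^ (n + 1 - k) * b ^ k * ((k : ℂ))⁻¹ :=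
    Finset.sum_congr rfl fun k _ => by rw [div_eq_mul_inv]
  have e2 : ∑ j ∈ Icc 1 n, ((a + b) ^ j - b ^ j) * b ^ (n + 1 - j) * ((j : ℂ))⁻¹
      = ∑ j ∈ Icc 1 n, (a + b) ^ j * b ^ (n + 1 - j) * ((j : ℂ))⁻¹
        - b ^ (n + 1) * ∑ j ∈ Icc 1 n, ((j : ℂ))⁻¹ := by
    rw [Finset.mul_sum, ← Finset.sum_sub_distrib]
    refine Finset.sum_congr rfl fun j hj => ?_
    simp only [Finset.mem_Icc] at hj
    have : b ^ j * b ^ (n + 1 - j) = b ^ (n + 1) := by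
      rw [← pow_add]; congr 1; omega
    rw [← this]
    ring
  rw [e1, e2, ← aux_harm_c, aux_harm_c n]
  simp only [Nat.sub_self, pow_zero]
  push_cast
  rw [← aux_harm_c]
  field_simp
  ring

lemma aux_reflect_sum (n : ℕ) (g : ℕ → ℂ) :
    ∑ k ∈ Icc 1 n, g k = ∑ k ∈ Icc 1 n, g (n + 1 - k) := by
  apply Finset.sum_nbij' (i := fun k => n + 1 - k) (j := fun k => n + 1 - k) <;>
    (intro k hk; simp only [Finset.mem_Icc] at *) <;> first | omega | (congr 1; omega)

lemma aux_partial_frac (a b : ℂ) (n : ℕ) :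
    ∑ k ∈ Icc 1 n, (a + b) ^ (n + 1 - k) * b ^ k * (((k : ℂ)) * ((n : ℂ) + 1 - (k : ℂ)))⁻¹
      = (((n : ℂ) + 1)⁻¹) *
        (∑ k ∈ Icc 1 n, (a + b) ^ (n + 1 - k) * b ^ k * ((k : ℂ))⁻¹
          + ∑ k ∈ Icc 1 n, (a + b) ^ k * b ^ (n + 1 - k) * ((k : ℂ))⁻¹) := by
  have refl1 : ∑ k ∈ Icc 1 n, (a + b) ^ k * b ^ (n + 1 - k) * ((k : ℂ))⁻¹
      = ∑ k ∈ Icc 1 n, (a + b) ^ (n + 1 - k) * b ^ (n + 1 - (n + 1 - k)) * (((n + 1 - k : ℕ) : ℂ))⁻¹ :=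
    aux_reflect_sum n _
  have refl2 : ∑ k ∈ Icc 1 n, (a + b) ^ (n + 1 - k) * b ^ (n + 1 - (n + 1 - k)) * (((n + 1 - k : ℕ) : ℂ))⁻¹
      = ∑ k ∈ Icc 1 n, (a + b) ^ (n + 1 - k) * b ^ k * (((n : ℂ) + 1 - (k : ℂ)))⁻¹ := by
    refine Finset.sum_congr rfl fun k hk => ?_
    simp only [Finset.mem_Icc] at hk
    have h1 : n + 1 - (n + 1 - k) = k := by omega
    have h2 : ((n + 1 - k : ℕ) : ℂ) = (n : ℂ) + 1 - (k : ℂ) := by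
      push_cast [Nat.cast_sub (show k ≤ n + 1 by omega)]; ring
    rw [h1, h2]
  rw [refl1, refl2, mul_add, Finset.mul_sum, Finset.mul_sum, ← Finset.sum_add_distrib]
  refine Finset.sum_congr rfl fun k hk => ?_
  simp only [Finset.mem_Icc] at hk
  have hk0 : (k : ℂ) ≠ 0 := Nat.cast_ne_zero.mpr (by omega)
  have hnk : ((n : ℂ) + 1 - (k : ℂ)) ≠ 0 := by
    have : ((n + 1 - k : ℕ) : ℂ) = (n : ℂ) + 1 - (k : ℂ) := by
      push_cast [Nat.cast_sub (show k ≤ n + 1 by omega)]; ring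
    rw [← this]
    exact Nat.cast_ne_zero.mpr (by omega)
  have hn1 : ((n : ℂ) + 1) ≠ 0 := Nat.cast_add_one_ne_zero n
  field_simp
  ring

theorem stmt_5 (a b : ℂ) (n : ℕ) :
    ∑ k ∈ Finset.range (n + 1),
        (n.choose k : ℂ) * a ^ k * b ^ (n - k) * (Hml k 2 : ℂ) =
      (Hml n 2 : ℂ) * (a + b) ^ n +
        2 * ∑ k ∈ Finset.Icc 1 n,
          (a + b) ^ (n - k) * b ^ k * (((harm (k - 1) : ℂ) - (harm (n - k) : ℂ)) / (k : ℂ)) := by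
  induction n with
  | zero => simp
  | succ n ih =>
    rw [aux_pascal_step]
    have hn1 : ((n : ℂ) + 1) ≠ 0 := Nat.cast_add_one_ne_zero n
    -- rewrite Hml (k+1) 2
    have e1 : ∑ k ∈ range (n + 1), (n.choose k : ℂ) * a ^ k * b ^ (n - k) * (Hml (k+1) 2 : ℂ)
        = ∑ k ∈ range (n + 1), (n.choose k : ℂ) * a ^ k * b ^ (n - k) * (Hml k 2 : ℂ)
          + 2 * ∑ k ∈ range (n + 1),
              (n.choose k : ℂ) * a ^ k * b ^ (n - k) * (harm k : ℂ) / ((k : ℂ) + 1) := by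
      rw [Finset.mul_sum, ← Finset.sum_add_distrib]
      refine Finset.sum_congr rfl fun k _ => ?_
      rw [aux_hml2_succ_c]
      field_simp
    -- the key sum identity
    have keyK : a * ∑ k ∈ range (n + 1),
          (n.choose k : ℂ) * a ^ k * b ^ (n - k) * (harm k : ℂ) / ((k : ℂ) + 1)
        = (((n : ℂ) + 1)⁻¹) * ∑ k ∈ Icc 1 (n + 1),
            ((n+1).choose k : ℂ) * a ^ k * b ^ (n + 1 - k) * (harm (k - 1) : ℂ) := by
      rw [aux_sum_Icc_one, Finset.mul_sum, Finset.mul_sum]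
      refine Finset.sum_congr rfl fun k hk => ?_
      simp only [Finset.mem_range] at hk
      have key : ((n+1).choose (k+1) : ℂ) * ((k : ℂ) + 1) = ((n : ℂ) + 1) * (n.choose k : ℂ) := by
        exact_mod_cast (Nat.add_one_mul_choose_eq n k).symm
      have hk1 : ((k : ℂ) + 1) ≠ 0 := Nat.cast_add_one_ne_zero k
      have hsub : n + 1 - (k + 1) = n - k := by omega
      rw [show k + 1 - 1 = k from rfl, hsub]
      push_cast
      field_simp
      linear_combination (-(a ^ (k+1) * b ^ (n-k) * (harm k : ℂ))) * key
    rw [e1, mul_add, ← mul_assoc a 2, mul_comm a 2, mul_assoc 2 a, keyK, aux_TT, ih]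
    -- now handle the RHS target
    rw [Finset.sum_Icc_succ_top (show 1 ≤ n + 1 by omega)
      (fun k => (a + b) ^ (n + 1 - k) * b ^ k * (((harm (k - 1) : ℂ) - (harm (n + 1 - k) : ℂ)) / (k : ℂ)))]
    have e4 : ∑ k ∈ Icc 1 n,
        (a + b) ^ (n + 1 - k) * b ^ k * (((harm (k - 1) : ℂ) - (harm (n + 1 - k) : ℂ)) / (k : ℂ))
        = (a + b) * ∑ k ∈ Icc 1 n,
            (a + b) ^ (n - k) * b ^ k * (((harm (k - 1) : ℂ) - (harm (n - k) : ℂ)) / (k : ℂ))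
          - ∑ k ∈ Icc 1 n,
            (a + b) ^ (n + 1 - k) * b ^ k * (((k : ℂ)) * ((n : ℂ) + 1 - (k : ℂ)))⁻¹ := by
      rw [Finset.mul_sum, ← Finset.sum_sub_distrib]
      refine Finset.sum_congr rfl fun k hk => ?_
      simp only [Finset.mem_Icc] at hk
      have h1 : n + 1 - k = (n - k) + 1 := by omega
      have h2 : ((n - k : ℕ) : ℂ) = (n : ℂ) - (k : ℂ) := by
        push_cast [Nat.cast_sub hk.2]; ring
      rw [h1, aux_harm_succ_c, pow_succ, h2]
      have hk0 : (k : ℂ) ≠ 0 := Nat.cast_ne_zero.mpr (by omega)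
      have hnk : ((n : ℂ) - (k : ℂ) + 1) ≠ 0 := by
        rw [← h2, show ((n-k:ℕ):ℂ) + 1 = (((n-k)+1 : ℕ) : ℂ) by push_cast; ring]
        exact Nat.cast_ne_zero.mpr (by omega)
      have hnk' : ((n : ℂ) + 1 - (k : ℂ)) ≠ 0 := by
        intro h; apply hnk; rw [← h]; ring
      field_simp
      ring
    rw [e4, aux_partial_frac, aux_hml2_succ_c]
    simp only [Nat.sub_self, pow_zero, aux_harm_zero, show harm (n+1-(n+1)) = harm 0 by norm_num, Nat.add_sub_cancel]
    field_simp
    push_cast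
    ring
end

section
/- For all integers n ≥ 1: Σ_{k=0}^{n} C(n,k) (−1)^k H_k^{(2)} = −H_n/n. -/
open Finset

lemma harm_succ (n : ℕ) : harm (n+1) = harm n + 1/((n:ℚ)+1) := by
  unfold harm
  rw [Finset.sum_Icc_succ_top (by omega)]
  push_cast; ring

lemma harm2_succ (n : ℕ) : harm2 (n+1) = harm2 n + 1/((n:ℚ)+1)^2 := by
  unfold harm2
  rw [Finset.sum_Icc_succ_top (by omega)]
  push_cast; ring

lemma altQ (n : ℕ) : ∑ i ∈ range (n+1), (-1:ℚ)^i * (((n+1).choose (i+1) : ℕ) : ℚ) = 1 := by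
  have h := Int.alternating_sum_range_choose (n := n+1)
  rw [if_neg (Nat.succ_ne_zero n)] at h
  have h2 : ∑ i ∈ range (n+2), (-1:ℚ)^i * (((n+1).choose i : ℕ) : ℚ) = 0 := by
    exact_mod_cast h
  rw [Finset.sum_range_succ'] at h2
  simp only [pow_zero, one_mul, Nat.choose_zero_right, Nat.cast_one] at h2
  have e : ∑ i ∈ range (n+1), (-1:ℚ)^(i+1) * (((n+1).choose (i+1) : ℕ) : ℚ)
      = -∑ i ∈ range (n+1), (-1:ℚ)^i * (((n+1).choose (i+1) : ℕ) : ℚ) := by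
    rw [← Finset.sum_neg_distrib]
    exact Finset.sum_congr rfl (fun i _ => by ring)
  rw [e] at h2
  linarith

lemma keyq (n i : ℕ) : ((n.choose i : ℕ) : ℚ) / ((i:ℚ)+1) = (((n+1).choose (i+1) : ℕ) : ℚ) / ((n:ℚ)+1) := by
  have h := Nat.add_one_mul_choose_eq n i
  have h2 : ((n:ℚ)+1) * (n.choose i : ℕ) = (((n+1).choose (i+1) : ℕ) : ℚ) * ((i:ℚ)+1) := by
    exact_mod_cast h
  have hi : ((i:ℚ)+1) ≠ 0 := by positivity
  have hn : ((n:ℚ)+1) ≠ 0 := by positivity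
  field_simp
  linarith [h2]

lemma L1 (n : ℕ) : ∑ j ∈ range (n+1), (-1:ℚ)^(j+1) * ((n.choose j : ℕ) : ℚ) / (j:ℚ) = harm n := by
  induction n with
  | zero => simp [harm]
  | succ n ih =>
    rw [Finset.sum_range_succ']
    have h0 : (-1:ℚ)^(0+1) * (((n+1).choose 0 : ℕ) : ℚ) / ((0:ℕ):ℚ) = 0 := by norm_num
    rw [h0, add_zero]
    have e : ∀ i ∈ range (n+1), (-1:ℚ)^(i+1+1) * (((n+1).choose (i+1) : ℕ) : ℚ) / (((i+1:ℕ)):ℚ)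
        = (-1:ℚ)^i * ((n.choose i : ℕ) : ℚ) / ((i:ℚ)+1)
          + (-1:ℚ)^i * ((n.choose (i+1) : ℕ) : ℚ) / ((i:ℚ)+1) := by
      intro i _
      rw [Nat.choose_succ_succ]
      push_cast
      ring
    rw [Finset.sum_congr rfl e, Finset.sum_add_distrib]
    have hA : ∑ i ∈ range (n+1), (-1:ℚ)^i * ((n.choose i : ℕ) : ℚ) / ((i:ℚ)+1)
        = 1/((n:ℚ)+1) := by
      have h3 : ∀ i ∈ range (n+1), (-1:ℚ)^i * ((n.choose i : ℕ) : ℚ) / ((i:ℚ)+1)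
          = ((-1:ℚ)^i * (((n+1).choose (i+1) : ℕ) : ℚ)) / ((n:ℚ)+1) := by
        intro i _
        rw [mul_div_assoc, keyq, mul_div_assoc]
      rw [Finset.sum_congr rfl h3, ← Finset.sum_div, altQ]
    have hB : ∑ i ∈ range (n+1), (-1:ℚ)^i * ((n.choose (i+1) : ℕ) : ℚ) / ((i:ℚ)+1)
        = harm n := by
      conv_rhs => rw [← ih, Finset.sum_range_succ']
      rw [Finset.sum_range_succ]
      have hz : ((n.choose (n+1) : ℕ) : ℚ) = 0 := by
        rw [Nat.choose_eq_zero_of_lt (by omega)]; norm_num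
      rw [hz]
      have hz0 : (-1:ℚ)^(0+1) * ((n.choose 0 : ℕ) : ℚ) / ((0:ℕ):ℚ) = 0 := by norm_num
      rw [hz0, add_zero]
      simp only [mul_zero, zero_div, add_zero]
      apply Finset.sum_congr rfl
      intro i _
      push_cast
      ring
    rw [hA, hB, harm_succ]
    ring

lemma Plem (m : ℕ) : ∑ k ∈ range (m+1), (-1:ℚ)^k * ((m.choose k : ℕ):ℚ) / ((k:ℚ)+1)^2
    = harm (m+1) / ((m:ℚ)+1) := by
  have hL := L1 (m+1)
  rw [Finset.sum_range_succ'] at hL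
  have h0 : (-1:ℚ)^(0+1) * (((m+1).choose 0 : ℕ):ℚ) / ((0:ℕ):ℚ) = 0 := by norm_num
  rw [h0, add_zero] at hL
  have e : ∀ k ∈ range (m+1), (-1:ℚ)^k * ((m.choose k : ℕ):ℚ) / ((k:ℚ)+1)^2
      = ((-1:ℚ)^(k+1+1) * (((m+1).choose (k+1) : ℕ):ℚ) / (((k+1:ℕ)):ℚ)) / ((m:ℚ)+1) := by
    intro k _
    have h2 : ((m:ℚ)+1) * ((m.choose k : ℕ):ℚ) = (((m+1).choose (k+1) : ℕ):ℚ) * ((k:ℚ)+1) := by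
      exact_mod_cast Nat.add_one_mul_choose_eq m k
    have hk : ((k:ℚ)+1) ≠ 0 := by positivity
    have hm : ((m:ℚ)+1) ≠ 0 := by positivity
    push_cast
    field_simp
    ring_nf
    ring_nf at h2
    linear_combination ((-1:ℚ)^k) * h2
  rw [Finset.sum_congr rfl e, ← Finset.sum_div, hL]

theorem stmt_8 (n : ℕ) (hn : 1 ≤ n) :
    ∑ k ∈ Finset.range (n + 1), (n.choose k : ℚ) * (-1) ^ k * harm2 k =
      -(harm n / (n : ℚ)) := by
  obtain ⟨m, rfl⟩ := Nat.exists_eq_succ_of_ne_zero (Nat.one_le_iff_ne_zero.mp hn)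
  rw [Finset.sum_range_succ']
  have h0 : (((m+1).choose 0 : ℕ):ℚ) * (-1)^0 * harm2 0 = 0 := by
    simp [harm2]
  rw [h0, add_zero]
  have e : ∀ k ∈ range (m+1),
      (((m+1).choose (k+1) : ℕ):ℚ) * (-1)^(k+1) * harm2 (k+1)
      = (-(((m.choose k : ℕ):ℚ) * (-1)^k * harm2 k)
          - (-1:ℚ)^k * ((m.choose k : ℕ):ℚ) / ((k:ℚ)+1)^2)
        + ((m.choose (k+1) : ℕ):ℚ) * (-1)^(k+1) * harm2 (k+1) := by
    intro k _
    rw [Nat.choose_succ_succ, harm2_succ]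
    push_cast
    field_simp
    ring
  rw [Finset.sum_congr rfl e, Finset.sum_add_distrib, Finset.sum_sub_distrib]
  have hY : ∑ k ∈ range (m+1), ((m.choose (k+1) : ℕ):ℚ) * (-1)^(k+1) * harm2 (k+1)
      = ∑ k ∈ range (m+1), ((m.choose k : ℕ):ℚ) * (-1)^k * harm2 k := by
    conv_rhs => rw [Finset.sum_range_succ']
    rw [Finset.sum_range_succ]
    have hz : ((m.choose (m+1) : ℕ):ℚ) = 0 := by
      rw [Nat.choose_eq_zero_of_lt (by omega)]; norm_num
    have hz2 : ((m.choose 0 : ℕ):ℚ) * (-1)^0 * harm2 0 = 0 := by simp [harm2]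
    rw [hz, hz2, add_zero, zero_mul, zero_mul, add_zero]
  rw [hY, Finset.sum_neg_distrib, Plem]
  have hm : ((m:ℚ)+1) ≠ 0 := by positivity
  push_cast
  field_simp
  ring
end

section
/- For all integers n ≥ 0: Σ_{k=0}^{n} C(n,k) F_k H_k(2) = H_n(2)·F_{2n} + 2 Σ_{k=1}^{n} F_{2(n−k)} (H_{k−1} − H_{n−k})/k, where F_n are the Fibonacci numbers. -/
open Finset

lemma binomR (x : ℝ) (n : ℕ) :
    ∑ k ∈ range (n+1), (n.choose k : ℝ) * x^k = (1+x)^n := by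
  rw [add_comm 1 x, add_pow]
  refine Finset.sum_congr rfl fun k _ => by ring


noncomputable def hR (n : ℕ) : ℝ := ∑ j ∈ range n, (1:ℝ)/(j+1)
noncomputable def h2R (n : ℕ) : ℝ := 2 * ∑ m ∈ range n, hR m/(m+1)

lemma hR_succ (n : ℕ) : hR (n+1) = hR n + 1/(n+1) := by
  simp [hR, Finset.sum_range_succ]

lemma h2R_succ (n : ℕ) : h2R (n+1) = h2R n + 2*(hR n/(n+1)) := by
  simp [h2R, Finset.sum_range_succ]; ring

lemma sum_choose_div (x : ℝ) (n : ℕ) :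
    ∑ k ∈ range (n+1), (n.choose k : ℝ) * x^(k+1)/(k+1)
      = ((1+x)^(n+1) - 1)/(n+1) := by
  have h1 : ∀ k ∈ range (n+1), (n.choose k : ℝ) * x^(k+1)/(k+1)
      = ((n+1).choose (k+1) : ℝ) * x^(k+1)/(n+1) := by
    intro k _
    have := Nat.add_one_mul_choose_eq n k
    have hc : ((n:ℝ)+1) * (n.choose k : ℝ) = ((n+1).choose (k+1) : ℝ) * (k+1) := by
      exact_mod_cast congrArg (Nat.cast : ℕ → ℝ) this
    field_simp
    linear_combination x^(k+1) * hc
  rw [Finset.sum_congr rfl h1]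
  have h2 : ∑ k ∈ range (n+1), ((n+1).choose (k+1) : ℝ) * x^(k+1)/(n+1)
      = (∑ k ∈ range (n+2), ((n+1).choose k : ℝ) * x^k - 1)/(n+1) := by
    rw [Finset.sum_range_succ' (fun k => ((n+1).choose k : ℝ) * x^k) (n+1)]
    simp [Finset.sum_div]
  rw [h2, binomR]

lemma S1id (x : ℝ) (n : ℕ) : ∑ k ∈ range (n+1), (n.choose k:ℝ)*x^k*hR k
    = (1+x)^n * hR n - ∑ i ∈ range n, (1+x)^i/((n:ℝ)-i) := by
  induction n with
  | zero => simp [hR]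
  | succ n ih =>
    have key : ∑ k ∈ range (n+1+1), ((n+1).choose k:ℝ)*x^k*hR k
        = (1+x) * (∑ k ∈ range (n+1), (n.choose k:ℝ)*x^k*hR k)
          + ((1+x)^(n+1)-1)/(n+1) := by
      rw [Finset.sum_range_succ' (fun k => ((n+1).choose k:ℝ)*x^k*hR k) (n+1)]
      have e1 : ∀ k ∈ range (n+1), ((n+1).choose (k+1):ℝ)*x^(k+1)*hR (k+1)
          = x*((n.choose k:ℝ)*x^k*hR k) + (n.choose k:ℝ)*x^(k+1)/(k+1)
            + (n.choose (k+1):ℝ)*x^(k+1)*hR (k+1) := by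
        intro k _
        rw [Nat.choose_succ_succ, hR_succ]
        push_cast
        field_simp
        ring
      rw [Finset.sum_congr rfl e1, Finset.sum_add_distrib, Finset.sum_add_distrib,
        ← Finset.mul_sum, sum_choose_div]
      have e2 : ∑ k ∈ range (n+1), (n.choose (k+1):ℝ)*x^(k+1)*hR (k+1)
          = ∑ k ∈ range (n+1), (n.choose k:ℝ)*x^k*hR k := by
        have h0 := Finset.sum_range_succ' (fun k => (n.choose k:ℝ)*x^k*hR k) (n+1)
        rw [Finset.sum_range_succ (fun k => (n.choose k:ℝ)*x^k*hR k) (n+1)] at h0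
        simp only [Nat.choose_succ_self, Nat.cast_zero, zero_mul, add_zero,
          Nat.choose_zero_right, Nat.cast_one, pow_zero, one_mul] at h0
        simpa [hR] using h0.symm
      rw [e2]
      simp [hR]
      ring
    rw [key, ih, hR_succ]
    have e3 : ∑ i ∈ range (n+1), (1+x)^i/(((n+1:ℕ):ℝ)-i)
        = (1+x) * ∑ i ∈ range n, (1+x)^i/((n:ℝ)-i) + 1/((n:ℝ)+1) := by
      rw [Finset.sum_range_succ' (fun i => (1+x)^i/(((n+1:ℕ):ℝ)-i)) n, Finset.mul_sum]
      congr 1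
      · apply Finset.sum_congr rfl; intro i hi; push_cast; ring
      · push_cast; norm_num
    rw [e3]
    push_cast
    ring

lemma P1 (x : ℝ) (n : ℕ) : ∑ j ∈ range n, ((n.choose (j+1)):ℝ)*x^(j+1)/(j+1)
    = ∑ i ∈ range n, ((1+x)^(i+1) - 1)/(i+1) := by
  induction n with
  | zero => simp
  | succ n ih =>
    rw [Finset.sum_range_succ (fun i => ((1+x)^(i+1) - 1)/((i:ℝ)+1)), ← ih]
    have hsplit : ∀ j ∈ range (n+1), (((n+1).choose (j+1)):ℝ)*x^(j+1)/(j+1)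
        = (n.choose j : ℝ)*x^(j+1)/(j+1) + (n.choose (j+1):ℝ)*x^(j+1)/(j+1) := by
      intro j _
      rw [Nat.choose_succ_succ]
      push_cast
      ring
    rw [Finset.sum_congr rfl hsplit, Finset.sum_add_distrib, sum_choose_div]
    have htop : ∑ j ∈ range (n+1), (n.choose (j+1):ℝ)*x^(j+1)/(j+1)
        = ∑ j ∈ range n, (n.choose (j+1):ℝ)*x^(j+1)/(j+1) := by
      rw [Finset.sum_range_succ]
      simp
    rw [htop]
    push_cast
    ring

noncomputable def Tsum (x : ℝ) (m : ℕ) : ℝ := ∑ j ∈ range m, (m.choose (j+1):ℝ)*x^(j+1)*hR j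
noncomputable def Ux (x : ℝ) (n : ℕ) : ℝ := ∑ j ∈ range n, (1+x)^(j+1)/(j+1)
noncomputable def Vx (x : ℝ) (n : ℕ) : ℝ := ∑ j ∈ range n, (1+x)^(n-j)/(j+1)
noncomputable def Sig (x : ℝ) (n : ℕ) : ℝ :=
  ∑ j ∈ range n, (1+x)^(n-1-j)*(hR j - hR (n-1-j))/(j+1)

lemma Tclosed (x : ℝ) (m : ℕ) : Tsum x m
    = (1+x)^m * hR m - ∑ i ∈ range m, (1+x)^i/((m:ℝ)-i)
      - ∑ i ∈ range m, ((1+x)^(i+1) - 1)/(i+1) := by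
  have e1 : ∀ j ∈ range m, (m.choose (j+1):ℝ)*x^(j+1)*hR j
      = (m.choose (j+1):ℝ)*x^(j+1)*hR (j+1) - (m.choose (j+1):ℝ)*x^(j+1)/(j+1) := by
    intro j _
    rw [hR_succ]
    ring
  rw [Tsum, Finset.sum_congr rfl e1, Finset.sum_sub_distrib, P1]
  have e2 : ∑ j ∈ range m, (m.choose (j+1):ℝ)*x^(j+1)*hR (j+1)
      = ∑ k ∈ range (m+1), (m.choose k:ℝ)*x^k*hR k := by
    rw [Finset.sum_range_succ' (fun k => (m.choose k:ℝ)*x^k*hR k) m]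
    simp [hR]
  rw [e2, S1id]

lemma reflectUx (x : ℝ) (n : ℕ) :
    ∑ j ∈ range n, (1+x)^(n-j)/((n:ℝ)-j) = Ux x n := by
  rw [Ux, ← Finset.sum_range_reflect (fun j => (1+x)^(j+1)/((j:ℝ)+1)) n]
  apply Finset.sum_congr rfl
  intro j hj
  have hj' : j < n := Finset.mem_range.mp hj
  have h1 : n - 1 - j + 1 = n - j := by omega
  have h2 : ((n - 1 - j : ℕ):ℝ) + 1 = (n:ℝ) - j := by
    have : ((n - 1 - j : ℕ):ℝ) = (n:ℝ) - 1 - j := by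
      rw [Nat.cast_sub (show j ≤ n - 1 by omega), Nat.cast_sub (show 1 ≤ n by omega)]
      push_cast; ring
    rw [this]; ring
  rw [h1, h2]

lemma Vx_reflect (x : ℝ) (n : ℕ) :
    ∑ i ∈ range (n+1), (1+x)^i/(((n:ℝ)+1)-i)
      = Vx x n + 1/((n:ℝ)+1) := by
  rw [← Finset.sum_range_reflect (fun i => (1+x)^i/(((n:ℝ)+1)-i)) (n+1)]
  rw [Finset.sum_range_succ]
  have e : ∀ j ∈ range n, (1+x)^(n+1-1-j)/(((n:ℝ)+1)-((n+1-1-j:ℕ):ℝ))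
      = (1+x)^(n-j)/((j:ℝ)+1) := by
    intro j hj
    have hj' : j < n := Finset.mem_range.mp hj
    have h1 : n + 1 - 1 - j = n - j := by omega
    have h2 : ((n - j : ℕ):ℝ) = (n:ℝ) - j := by
      rw [Nat.cast_sub (by omega)]
    rw [h1, h2]
    congr 1
    ring
  rw [Finset.sum_congr rfl e]
  have h3 : n + 1 - 1 - n = 0 := by omega
  rw [h3]
  have h4 : ((0:ℕ):ℝ) = 0 := by norm_num
  rw [Vx]
  norm_num

lemma Tval (x : ℝ) (n : ℕ) : Tsum x (n+1)
    = (1+x)^(n+1) * hR n + hR n - Ux x n - Vx x n := by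
  rw [Tclosed, hR_succ]
  have eW : ∑ i ∈ range (n+1), (1+x)^i/(((n+1:ℕ):ℝ)-(i:ℝ)) = Vx x n + 1/((n:ℝ)+1) := by
    rw [← Vx_reflect x n]
    apply Finset.sum_congr rfl
    intro i _
    push_cast
    ring_nf
  have eZ : ∑ i ∈ range (n+1), ((1+x)^(i+1)-1)/((i:ℝ)+1)
      = Ux x n + (1+x)^(n+1)/((n:ℝ)+1) - hR n - 1/((n:ℝ)+1) := by
    have t : ∀ i ∈ range (n+1), ((1+x)^(i+1)-1)/((i:ℝ)+1)
        = (1+x)^(i+1)/((i:ℝ)+1) - 1/((i:ℝ)+1) := by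
      intro i _; ring
    rw [Finset.sum_congr rfl t, Finset.sum_sub_distrib]
    have u : ∑ i ∈ range (n+1), (1+x)^(i+1)/((i:ℝ)+1)
        = Ux x n + (1+x)^(n+1)/((n:ℝ)+1) := by
      rw [Finset.sum_range_succ, Ux]
    have h : ∑ i ∈ range (n+1), (1:ℝ)/((i:ℝ)+1) = hR n + 1/((n:ℝ)+1) := by
      rw [← hR_succ]
      rfl
    rw [u, h]
    ring
  rw [eW, eZ]
  ring

lemma Sig_succ (x : ℝ) (n : ℕ) :
    Sig x (n+1) = (1+x) * Sig x n + hR n/((n:ℝ)+1) - (Ux x n + Vx x n)/((n:ℝ)+1) := by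
  have step0 : Sig x (n+1) = ∑ j ∈ range (n+1), (1+x)^(n-j)*(hR j - hR (n-j))/((j:ℝ)+1) := by
    rw [Sig]
    apply Finset.sum_congr rfl
    intro j _
    rw [show n+1-1-j = n-j from by omega]
  rw [step0, Finset.sum_range_succ, Nat.sub_self]
  have main : ∑ j ∈ range n, (1+x)^(n-j)*(hR j - hR (n-j))/((j:ℝ)+1)
      = (1+x) * Sig x n - (Ux x n + Vx x n)/((n:ℝ)+1) := by
    have term : ∀ j ∈ range n, (1+x)^(n-j)*(hR j - hR (n-j))/((j:ℝ)+1)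
        = (1+x)*((1+x)^(n-1-j)*(hR j - hR (n-1-j))/((j:ℝ)+1))
          - ((1+x)^(n-j)/((n:ℝ)-(j:ℝ)) + (1+x)^(n-j)/((j:ℝ)+1))/((n:ℝ)+1) := by
      intro j hj
      have hj' : j < n := Finset.mem_range.mp hj
      have h2 : ((n-1-j:ℕ):ℝ) + 1 = (n:ℝ) - j := by
        rw [Nat.cast_sub (show j ≤ n - 1 by omega), Nat.cast_sub (show 1 ≤ n by omega)]
        push_cast; ring
      rw [show n-j = n-1-j+1 from by omega, hR_succ, pow_succ, h2]
      have hjn : (j:ℝ) < (n:ℝ) := by exact_mod_cast hj'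
      have hA : (n:ℝ) - j ≠ 0 := by intro h; nlinarith
      have hc : ((j:ℝ)+1) ≠ 0 := by positivity
      have hn : ((n:ℝ)+1) ≠ 0 := by positivity
      field_simp
      ring
    rw [Finset.sum_congr rfl term, Finset.sum_sub_distrib, ← Finset.mul_sum,
      ← Finset.sum_div, Finset.sum_add_distrib, reflectUx]
    rw [Sig, Vx]
  rw [main]
  simp [hR]
  ring



lemma S2id (x : ℝ) (n : ℕ) :
    ∑ k ∈ range (n+1), (n.choose k:ℝ)*x^k*h2R k = (1+x)^n * h2R n + 2 * Sig x n := by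
  induction n with
  | zero => simp [h2R, Sig]
  | succ n ih =>
    have key : ∑ k ∈ range (n+1+1), ((n+1).choose k:ℝ)*x^k*h2R k
        = (1+x) * (∑ k ∈ range (n+1), (n.choose k:ℝ)*x^k*h2R k)
          + (2/((n:ℝ)+1)) * Tsum x (n+1) := by
      rw [Finset.sum_range_succ' (fun k => ((n+1).choose k:ℝ)*x^k*h2R k) (n+1)]
      have e1 : ∀ k ∈ range (n+1), ((n+1).choose (k+1):ℝ)*x^(k+1)*h2R (k+1)
          = x*((n.choose k:ℝ)*x^k*h2R k)
            + (2/((n:ℝ)+1))*(((n+1).choose (k+1):ℝ)*x^(k+1)*hR k)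
            + (n.choose (k+1):ℝ)*x^(k+1)*h2R (k+1) := by
        intro k _
        have hc : ((n:ℝ)+1) * (n.choose k : ℝ)
            = ((n.choose k : ℝ) + (n.choose (k+1):ℝ)) * ((k:ℝ)+1) := by
          have h := Nat.add_one_mul_choose_eq n k
          rw [Nat.choose_succ_succ] at h
          exact_mod_cast h
        rw [h2R_succ, Nat.choose_succ_succ]
        push_cast
        have hk : ((k:ℝ)+1) ≠ 0 := by positivity
        have hn : ((n:ℝ)+1) ≠ 0 := by positivity
        field_simp
        linear_combination (2*x^(k+1)*hR k) * hc
      rw [Finset.sum_congr rfl e1, Finset.sum_add_distrib, Finset.sum_add_distrib,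
        ← Finset.mul_sum, ← Finset.mul_sum]
      have e2 : ∑ k ∈ range (n+1), (n.choose (k+1):ℝ)*x^(k+1)*h2R (k+1)
          = ∑ k ∈ range (n+1), (n.choose k:ℝ)*x^k*h2R k := by
        have h0 := Finset.sum_range_succ' (fun k => (n.choose k:ℝ)*x^k*h2R k) (n+1)
        rw [Finset.sum_range_succ (fun k => (n.choose k:ℝ)*x^k*h2R k) (n+1)] at h0
        simp only [Nat.choose_succ_self, Nat.cast_zero, zero_mul, add_zero,
          Nat.choose_zero_right, Nat.cast_one, pow_zero, one_mul] at h0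
        simpa [h2R] using h0.symm
      rw [e2, Tsum]
      simp [h2R]
      ring
    rw [key, ih, Tval, h2R_succ, Sig_succ]
    push_cast
    ring


def hQ (n : ℕ) : ℚ := ∑ j ∈ range n, (1:ℚ)/(j+1)

lemma sum_Icc_one {M : Type*} [AddCommMonoid M] (f : ℕ → M) (n : ℕ) :
    ∑ k ∈ Icc 1 n, f k = ∑ j ∈ range n, f (j+1) := by
  rw [← Finset.Ico_add_one_right_eq_Icc, Finset.sum_Ico_eq_sum_range]
  simp [add_comm]

lemma harm_eq (n : ℕ) : harm n = hQ n := by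
  rw [harm, sum_Icc_one (fun j => (1:ℚ)/(j:ℚ)) n, hQ]
  apply Finset.sum_congr rfl
  intro j _
  push_cast
  ring

lemma stepA (n : ℕ) : Hml n 2
    = ∑ p ∈ ((Icc 1 n ×ˢ Icc 1 n).filter fun p : ℕ×ℕ => p.1+p.2 ≤ n),
        (1:ℚ)/p.1 * (1/p.2) := by
  rw [Hml]
  refine Finset.sum_nbij' (i := fun k => (k 0, k 1)) (j := fun p => ![p.1, p.2])
    ?_ ?_ ?_ ?_ ?_
  · intro k hk
    simp only [Finset.mem_filter, Fintype.mem_piFinset] at hk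
    simp only [Finset.mem_filter, Finset.mem_product]
    refine ⟨⟨hk.1 0, hk.1 1⟩, ?_⟩
    have := hk.2
    rwa [Fin.sum_univ_two] at this
  · intro p hp
    simp only [Finset.mem_filter, Finset.mem_product] at hp
    simp only [Finset.mem_filter, Fintype.mem_piFinset]
    constructor
    · intro i
      fin_cases i
      · simpa using hp.1.1
      · simpa using hp.1.2
    · rw [Fin.sum_univ_two]
      simpa using hp.2
  · intro k _
    show ![k 0, k 1] = k
    funext i
    fin_cases i <;> simp
  · intro p _
    show ((![p.1, p.2] : Fin 2 → ℕ) 0, (![p.1, p.2] : Fin 2 → ℕ) 1) = p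
    simp
  · intro k _
    show ∏ i : Fin 2, 1 / ((k i : ℚ)) = 1/(k 0 : ℚ) * (1/(k 1 : ℚ))
    rw [Fin.prod_univ_two]

lemma stepB (n : ℕ) :
    ∑ p ∈ ((Icc 1 n ×ˢ Icc 1 n).filter fun p : ℕ×ℕ => p.1+p.2 ≤ n),
        (1:ℚ)/p.1 * (1/p.2)
      = ∑ q ∈ ((Icc 1 n ×ˢ Icc 1 n).filter fun q : ℕ×ℕ => q.2 < q.1),
          (1:ℚ)/q.2 * (1/((q.1:ℚ) - (q.2:ℚ))) := by
  refine Finset.sum_nbij' (i := fun p => (p.1+p.2, p.1)) (j := fun q => (q.2, q.1 - q.2))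
    ?_ ?_ ?_ ?_ ?_
  · intro p hp
    simp only [Finset.mem_filter, Finset.mem_product, Finset.mem_Icc] at hp ⊢
    omega
  · intro q hq
    simp only [Finset.mem_filter, Finset.mem_product, Finset.mem_Icc] at hq ⊢
    omega
  · intro p hp
    simp only [Finset.mem_filter, Finset.mem_product, Finset.mem_Icc] at hp
    ext <;> simp <;> omega
  · intro q hq
    simp only [Finset.mem_filter, Finset.mem_product, Finset.mem_Icc] at hq
    ext <;> simp <;> omega
  · intro p hp
    simp only [Finset.mem_filter, Finset.mem_product, Finset.mem_Icc] at hp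
    have h1 : (((p.1 + p.2 : ℕ)):ℚ) - (p.1:ℚ) = (p.2:ℚ) := by push_cast; ring
    simp only [h1]

lemma inner_id (m : ℕ) (hm : 1 ≤ m) :
    ∑ a ∈ Icc 1 (m-1), (1:ℚ)/a * (1/((m:ℚ)-(a:ℚ))) = 2*hQ (m-1)/m := by
  rw [sum_Icc_one (fun a => (1:ℚ)/a * (1/((m:ℚ)-(a:ℚ)))) (m-1)]
  have term : ∀ j ∈ range (m-1), (1:ℚ)/((j:ℕ)+1:ℕ) * (1/((m:ℚ)-((j+1:ℕ):ℚ)))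
      = (1/(m:ℚ)) * (1/((j:ℚ)+1) + 1/((m:ℚ)-1-(j:ℚ))) := by
    intro j hj
    have hj' : j < m - 1 := Finset.mem_range.mp hj
    have hc : ((j:ℚ)+1) ≠ 0 := by positivity
    have hjm : (j:ℚ) < (m:ℚ) - 1 := by
      have : (j:ℕ) < m - 1 := hj'
      have h2 : ((j:ℕ):ℚ) < ((m-1:ℕ):ℚ) := by exact_mod_cast this
      rwa [Nat.cast_sub hm, Nat.cast_one] at h2
    have hd : ((m:ℚ)-1-(j:ℚ)) ≠ 0 := by intro h; nlinarith
    have hm0 : ((m:ℚ)) ≠ 0 := by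
      have : (1:ℚ) ≤ (m:ℚ) := by exact_mod_cast hm
      intro h; nlinarith
    have e : (1:ℚ)/((j:ℚ)+1) + 1/((m:ℚ)-1-(j:ℚ)) = (m:ℚ)/(((j:ℚ)+1)*((m:ℚ)-1-(j:ℚ))) := by
      rw [div_add_div _ _ hc hd]
      congr 1
      ring
    have goal' : (1:ℚ)/((j:ℚ)+1) * (1/((m:ℚ)-1-(j:ℚ)))
        = (1/(m:ℚ)) * (1/((j:ℚ)+1) + 1/((m:ℚ)-1-(j:ℚ))) := by
      rw [e, div_mul_div_comm, div_mul_div_comm, one_mul, one_mul, div_mul_cancel_left₀ hm0, one_div]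
    push_cast
    rw [show (m:ℚ) - ((j:ℚ)+1) = (m:ℚ)-1-(j:ℚ) from by ring]
    exact goal'
  rw [Finset.sum_congr rfl term, ← Finset.mul_sum, Finset.sum_add_distrib]
  have refl2 : ∑ j ∈ range (m-1), 1/((m:ℚ)-1-(j:ℚ)) = hQ (m-1) := by
    rw [hQ, ← Finset.sum_range_reflect (fun j => (1:ℚ)/((j:ℚ)+1)) (m-1)]
    apply Finset.sum_congr rfl
    intro j hj
    have hj' : j < m - 1 := Finset.mem_range.mp hj
    have : ((m - 1 - 1 - j : ℕ):ℚ) = (m:ℚ) - 2 - j := by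
      rw [Nat.cast_sub (show j ≤ m-1-1 by omega), Nat.cast_sub (show 1 ≤ m-1 by omega),
        Nat.cast_sub hm]
      push_cast; ring
    rw [this]
    ring_nf
  have refl1 : ∑ j ∈ range (m-1), 1/((j:ℚ)+1) = hQ (m-1) := by rw [hQ]
  rw [refl1, refl2]
  ring

lemma HmlQ (n : ℕ) : Hml n 2 = 2 * ∑ i ∈ range n, hQ i/((i:ℚ)+1) := by
  rw [stepA, stepB, Finset.sum_filter, Finset.sum_product]
  have inner : ∀ m ∈ Icc 1 n,
      (∑ a ∈ Icc 1 n, if a < m then (1:ℚ)/a * (1/((m:ℚ)-(a:ℚ))) else 0)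
        = 2*hQ (m-1)/m := by
    intro m hm
    obtain ⟨hm1, hm2⟩ := Finset.mem_Icc.mp hm
    rw [← Finset.sum_filter]
    have hfil : (Icc 1 n).filter (fun a => a < m) = Icc 1 (m-1) := by
      ext a
      simp only [Finset.mem_filter, Finset.mem_Icc]
      omega
    rw [hfil, inner_id m hm1]
  rw [Finset.sum_congr rfl inner, sum_Icc_one (fun m => 2*hQ (m-1)/(m:ℚ)) n, Finset.mul_sum]
  apply Finset.sum_congr rfl
  intro i _
  rw [show i+1-1 = i from rfl]
  push_cast
  ring


lemma cast_hQ (n : ℕ) : ((hQ n : ℚ) : ℝ) = hR n := by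
  rw [hQ, hR]
  push_cast
  rfl

lemma cast_harm (n : ℕ) : ((harm n : ℚ) : ℝ) = hR n := by
  rw [harm_eq, cast_hQ]

lemma castH2 (n : ℕ) : ((Hml n 2 : ℚ) : ℝ) = h2R n := by
  rw [HmlQ, h2R]
  push_cast [cast_hQ]
  rfl

open Real in
lemma realMain (n : ℕ) :
    ∑ k ∈ range (n+1), (n.choose k:ℝ)*(Nat.fib k:ℝ)*h2R k
      = h2R n * (Nat.fib (2*n):ℝ)
        + 2*∑ j ∈ range n, (Nat.fib (2*(n-1-j)):ℝ) * ((hR j - hR (n-1-j))/((j:ℝ)+1)) := by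
  have h5 : Real.sqrt 5 ≠ 0 := by positivity
  have fibm : ∀ m : ℕ, (Nat.fib m : ℝ) * Real.sqrt 5 = goldenRatio^m - goldenConj^m := by
    intro m
    rw [Real.coe_fib_eq]
    field_simp
  apply mul_right_cancel₀ h5
  have gphi : (1 + goldenRatio) = goldenRatio^2 := by rw [goldenRatio_sq]; ring
  have gpsi : (1 + goldenConj) = goldenConj^2 := by rw [goldenConj_sq]; ring
  have lhs : (∑ k ∈ range (n+1), (n.choose k:ℝ)*(Nat.fib k:ℝ)*h2R k) * Real.sqrt 5
      = (∑ k ∈ range (n+1), (n.choose k:ℝ)*goldenRatio^k*h2R k)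
        - ∑ k ∈ range (n+1), (n.choose k:ℝ)*goldenConj^k*h2R k := by
    rw [Finset.sum_mul, ← Finset.sum_sub_distrib]
    apply Finset.sum_congr rfl
    intro k _
    linear_combination ((n.choose k:ℝ)*h2R k) * fibm k
  rw [lhs, S2id, S2id, gphi, gpsi, ← pow_mul, ← pow_mul]
  have sigdiff : 2*Sig goldenRatio n - 2*Sig goldenConj n
      = (2*∑ j ∈ range n, (Nat.fib (2*(n-1-j)):ℝ)
          * ((hR j - hR (n-1-j))/((j:ℝ)+1))) * Real.sqrt 5 := by
    rw [Sig, Sig, ← mul_sub, ← Finset.sum_sub_distrib, mul_assoc, Finset.sum_mul]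
    congr 1
    apply Finset.sum_congr rfl
    intro j _
    rw [gphi, gpsi, ← pow_mul, ← pow_mul]
    linear_combination (-(hR j - hR (n-1-j))/((j:ℝ)+1)) * fibm (2*(n-1-j))
  have fib2n := fibm (2*n)
  linear_combination sigdiff - h2R n * fib2n

theorem stmt_10 (n : ℕ) :
    ∑ k ∈ Finset.range (n + 1), (n.choose k : ℚ) * (Nat.fib k : ℚ) * Hml k 2 =
      Hml n 2 * (Nat.fib (2 * n) : ℚ) +
        2 * ∑ k ∈ Finset.Icc 1 n,
          (Nat.fib (2 * (n - k)) : ℚ) * ((harm (k - 1) - harm (n - k)) / (k : ℚ)) := by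
  have cast5 : ∀ q r : ℚ, (q:ℝ) = (r:ℝ) → q = r := fun q r h => Rat.cast_injective h
  apply cast5
  push_cast [castH2, cast_harm]
  rw [realMain n, sum_Icc_one
    (fun k => (Nat.fib (2*(n-k)):ℝ) * ((hR (k-1) - hR (n-k))/(k:ℝ))) n]
  have e : ∀ j ∈ range n,
      ((Nat.fib (2*(n-(j+1))):ℝ) * ((hR (j+1-1) - hR (n-(j+1)))/(((j+1:ℕ)):ℝ)))
        = (Nat.fib (2*(n-1-j)):ℝ) * ((hR j - hR (n-1-j))/((j:ℝ)+1)) := by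
    intro j _
    rw [show n - (j+1) = n-1-j from by omega, show j+1-1 = j from rfl]
    push_cast
    ring
  rw [Finset.sum_congr rfl e]
end
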